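/- Let $k,n$ be positive integers, and let $m,l$ be natural numbers with $m+k(1-l)=1-n$ (so $kl-m=k+n-1$). For $p\ge\frac{2k+2n}{k+n-1}$, the function $(z,w)\mapsto z_1^m/w^l$ does not belong to $L^p(\Omega^{n+1}_k)$; equivalently, $\int_{\Omega^{n+1}_k}\frac{|z_1|^{mp}}{|w|^{lp}}\,dV=\infty$ for such $p$. -/

import Mathlib

open MeasureTheory

noncomputable instance (n : ℕ) : MeasurableSpace (EuclideanSpace ℂ (Fin n)) :=
  MeasurableSpace.comap WithLp.ofLp MeasurableSpace.pi

instance (n : ℕ) : BorelSpace (EuclideanSpace ℂ (Fin n)) :=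
  PiLp.borelSpace (X := fun _ : Fin n => ℂ) 2

noncomputable instance (n : ℕ) : MeasureSpace (EuclideanSpace ℂ (Fin n)) :=
  ⟨Measure.map (WithLp.toLp 2) (Measure.pi fun _ : Fin n => (volume : Measure ℂ))⟩

/-- The generalized Hartogs triangle
`Ω^{n+1}_k = {(z,w) ∈ ℂⁿ × ℂ : |z|^k < |w| < 1}`. -/
def Omega (k n : ℕ) : Set (EuclideanSpace ℂ (Fin n) × ℂ) :=
  {x | ‖x.1‖ ^ k < ‖x.2‖ ∧ ‖x.2‖ < 1}

set_option maxHeartbeats 1000000 in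
/-- For `m + k(1-l) = 1-n` and `p ≥ (2k+2n)/(k+n-1)`, the function
`z₁^m / w^l` is not in `L^p(Ω^{n+1}_k)`:
`∫_{Ω^{n+1}_k} |z₁|^{mp} / |w|^{lp} dV = ∞`. -/
theorem monomial_not_in_Lp (k n : ℕ) (hk : 0 < k) (hn : 0 < n) (m l : ℕ)
    (hml : (m : ℤ) + k * (1 - l) = 1 - n) (p : ℝ)
    (hp : (2 * k + 2 * n : ℝ) / (k + n - 1) ≤ p) :
    (∫⁻ x in Omega k n,
        ENNReal.ofReal (‖x.1 ⟨0, hn⟩‖ ^ ((m : ℝ) * p) / ‖x.2‖ ^ ((l : ℝ) * p))) = ⊤ := by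
  classical
  have hk0 : (0:ℝ) < k := by exact_mod_cast hk
  have hn0 : (0:ℝ) < n := by exact_mod_cast hn
  have hk1 : (1:ℝ) ≤ k := by exact_mod_cast hk
  have hn1 : (1:ℝ) ≤ n := by exact_mod_cast hn
  have hden : (0:ℝ) < (k:ℝ) + n - 1 := by linarith
  set i0 : Fin n := ⟨0, hn⟩ with hi0_def
  set a : ℝ := (m:ℝ) * p with ha_def
  set b : ℝ := (l:ℝ) * p with hb_def
  have hp0 : 0 < p := lt_of_lt_of_le (div_pos (by linarith) hden) hp
  have ha : 0 ≤ a := by rw [ha_def]; positivity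
  have hb : 0 ≤ b := by rw [hb_def]; positivity
  have hklm : (k:ℝ) * l - m = (k:ℝ) + n - 1 := by
    have h : ((m:ℝ)) + (k:ℝ) * (1 - (l:ℝ)) = 1 - (n:ℝ) := by exact_mod_cast hml
    linear_combination -h
  set q : ℝ := (a + 2 * (n:ℝ)) / (k:ℝ) with hq_def
  have hbq : 0 ≤ b - 2 - q := by
    have h1 : (2 * (k:ℝ) + 2 * n) ≤ p * ((k:ℝ) + n - 1) := (div_le_iff₀ hden).mp hp
    have h2 : b * (k:ℝ) - a = p * ((k:ℝ) + n - 1) := by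
      rw [ha_def, hb_def]; linear_combination p * hklm
    have h3 : q * (k:ℝ) = a + 2 * n := by
      rw [hq_def]; field_simp
    nlinarith [hk0]
  have hS : 0 < Real.sqrt n := Real.sqrt_pos.mpr hn0
  have h2p : (0:ℝ) < 2 := two_pos
  -- radii
  set r : ℕ → ℝ := fun j => (2:ℝ) ^ (-(j:ℝ)) with hr_def
  set e : ℕ → ℝ := fun j => (-((j:ℝ) + 1)) / k with he_def
  set R : ℕ → ℝ := fun j => (2:ℝ) ^ (e j) with hR_def
  set ν : ℕ → ℝ := fun j => R j / Real.sqrt n with hν_def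
  have hr_pos : ∀ j, 0 < r j := fun j => Real.rpow_pos_of_pos h2p _
  have hR_pos : ∀ j, 0 < R j := fun j => Real.rpow_pos_of_pos h2p _
  have hν_pos : ∀ j, 0 < ν j := fun j => div_pos (hR_pos j) hS
  have hr_one : ∀ j, r j ≤ 1 := fun j =>
    Real.rpow_le_one_of_one_le_of_nonpos one_le_two (neg_nonpos.mpr (Nat.cast_nonneg j))
  have hr_anti : ∀ i j : ℕ, i ≤ j → r j ≤ r i := fun i j hij =>
    Real.rpow_le_rpow_of_exponent_le one_le_two (neg_le_neg (by exact_mod_cast hij))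
  have hr_half : ∀ j, r (j+1) = r j / 2 := by
    intro j
    simp only [hr_def]
    have hexp : (-(((j:ℕ)+1:ℕ):ℝ)) = (-(j:ℝ)) + (-1) := by push_cast; ring
    rw [hexp, Real.rpow_add h2p, Real.rpow_neg_one]
    ring
  have hRk : ∀ j, R j ^ k = r (j+1) := by
    intro j
    simp only [hR_def, hr_def, he_def]
    rw [← Real.rpow_natCast ((2:ℝ) ^ ((-((j:ℝ) + 1)) / (k:ℝ))) k, ← Real.rpow_mul h2p.le]
    congr 1
    push_cast
    field_simp
  -- the sets
  set W : ℕ → Set ℂ := fun j => Metric.ball 0 (r j) \ Metric.ball 0 (r (j+1)) with hW_def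
  set Z : ℕ → Set (EuclideanSpace ℂ (Fin n)) := fun j =>
    WithLp.ofLp ⁻¹' Set.pi Set.univ (fun i => if i = i0 then Metric.ball 0 (ν j) \ Metric.ball 0 (ν j / 2)
      else Metric.ball (0:ℂ) (ν j)) with hZ_def
  have hWm : ∀ j, MeasurableSet (W j) := fun j =>
    measurableSet_ball.diff measurableSet_ball
  have hZm : ∀ j, MeasurableSet (Z j) := by
    intro j
    simp only [hZ_def]
    refine MeasurableSpace.measurableSet_comap.mpr ⟨_, ?_, rfl⟩
    apply MeasurableSet.univ_pi
    intro i
    split_ifs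
    · exact measurableSet_ball.diff measurableSet_ball
    · exact measurableSet_ball
  -- membership facts
  have hZnorm : ∀ j z, z ∈ Z j → ‖z‖ < R j := by
    intro j z hz
    simp only [hZ_def, Set.mem_preimage] at hz
    rw [Set.mem_univ_pi] at hz
    have hc : ∀ i : Fin n, ‖z i‖ < ν j := by
      intro i
      have h := hz i
      by_cases hii : i = i0
      · rw [if_pos hii] at h; exact mem_ball_zero_iff.mp h.1
      · rw [if_neg hii] at h; exact mem_ball_zero_iff.mp h
    have hne : (Finset.univ : Finset (Fin n)).Nonempty := ⟨i0, Finset.mem_univ i0⟩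
    have hsum : ∑ i : Fin n, ‖z i‖ ^ 2 < R j ^ 2 := by
      have h1 : ∑ i : Fin n, ‖z i‖ ^ 2 < ∑ _i : Fin n, ν j ^ 2 :=
        Finset.sum_lt_sum_of_nonempty hne (fun i _ =>
          pow_lt_pow_left₀ (hc i) (norm_nonneg (z i)) (two_ne_zero))
      have h2 : ∑ _i : Fin n, ν j ^ 2 = (n:ℝ) * ν j ^ 2 := by
        rw [Finset.sum_const, Finset.card_univ, Fintype.card_fin, nsmul_eq_mul]
      have h3 : (n:ℝ) * ν j ^ 2 = R j ^ 2 := by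
        simp only [hν_def]
        rw [div_pow, Real.sq_sqrt hn0.le]
        field_simp
      rw [h2, h3] at h1
      exact h1
    have hnz : ‖z‖ = Real.sqrt (∑ i, ‖z i‖ ^ 2) := by
      rw [EuclideanSpace.norm_eq]
    rw [hnz]
    calc Real.sqrt (∑ i, ‖z i‖ ^ 2) < Real.sqrt (R j ^ 2) :=
          Real.sqrt_lt_sqrt (Finset.sum_nonneg fun i _ => sq_nonneg _) hsum
      _ = R j := Real.sqrt_sq (hR_pos j).le
  have hsub : ∀ j, (Z j ×ˢ W j) ⊆ Omega k n := by
    intro j x hx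
    obtain ⟨hz, hw⟩ := hx
    have hw1 : ‖x.2‖ < r j := mem_ball_zero_iff.mp hw.1
    have hw2 : r (j+1) ≤ ‖x.2‖ := by
      by_contra h
      exact hw.2 (mem_ball_zero_iff.mpr (not_le.mp h))
    refine ⟨?_, lt_of_lt_of_le hw1 (hr_one j)⟩
    calc ‖x.1‖ ^ k < R j ^ k :=
          pow_lt_pow_left₀ (hZnorm j x.1 hz) (norm_nonneg _) hk.ne'
      _ = r (j+1) := hRk j
      _ ≤ ‖x.2‖ := hw2
  have hWd : ∀ i j : ℕ, i < j → ∀ w : ℂ, w ∈ W i → w ∈ W j → False := by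
    intro i j hij w hwi hwj
    have h1 : r (i+1) ≤ ‖w‖ := by
      by_contra h
      exact hwi.2 (mem_ball_zero_iff.mpr (not_le.mp h))
    have h2 : ‖w‖ < r j := mem_ball_zero_iff.mp hwj.1
    have h3 := hr_anti (i+1) j hij
    linarith
  have hdisj : Pairwise (Function.onFun Disjoint (fun j => Z j ×ˢ W j)) := by
    intro i j hij
    rcases hij.lt_or_gt with h | h
    · refine Set.disjoint_left.mpr ?_
      rintro x ⟨_, hwi⟩ ⟨_, hwj⟩
      exact hWd i j h x.2 hwi hwj
    · refine Set.disjoint_left.mpr ?_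
      rintro x ⟨_, hwi⟩ ⟨_, hwj⟩
      exact hWd j i h x.2 hwj hwi
  -- volumes
  have hball : ∀ ρ : ℝ, 0 ≤ ρ →
      volume (Metric.ball (0:ℂ) ρ) = ENNReal.ofReal (ρ ^ 2 * Real.pi) := by
    intro ρ hρ
    rw [Complex.volume_ball, ENNReal.ofReal_mul (by positivity), ENNReal.ofReal_pow hρ,
      ← NNReal.coe_real_pi, ENNReal.ofReal_coe_nnreal]
  have hannulus : ∀ ρ : ℝ, 0 < ρ →
      volume (Metric.ball (0:ℂ) ρ \ Metric.ball 0 (ρ / 2))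
        = ENNReal.ofReal ((3/4) * ρ ^ 2 * Real.pi) := by
    intro ρ hρ
    rw [measure_diff (Metric.ball_subset_ball (by linarith))
        measurableSet_ball.nullMeasurableSet measure_ball_lt_top.ne,
      hball ρ hρ.le, hball (ρ/2) (by positivity),
      ← ENNReal.ofReal_sub _ (by positivity)]
    congr 1
    ring
  have hWvol : ∀ j, volume (W j) = ENNReal.ofReal ((3/4) * r j ^ 2 * Real.pi) := by
    intro j
    have hWj : W j = Metric.ball (0:ℂ) (r j) \ Metric.ball 0 (r j / 2) := by
      simp only [hW_def, hr_half j]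
    rw [hWj, hannulus (r j) (hr_pos j)]
  have hZvol : ∀ j, volume (Z j) =
      ENNReal.ofReal (((3/4) * ν j ^ 2 * Real.pi) * (ν j ^ 2 * Real.pi) ^ (n-1)) := by
    intro j
    have hpp : volume (Z j) = ∏ i : Fin n,
        volume (if i = i0 then Metric.ball 0 (ν j) \ Metric.ball 0 (ν j / 2)
          else Metric.ball (0:ℂ) (ν j)) := by
      have hmeas : Measurable (WithLp.toLp 2 : (Fin n → ℂ) → EuclideanSpace ℂ (Fin n)) := by
        intro s hs
        obtain ⟨t, ht, rfl⟩ := hs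
        exact ht
      simp only [hZ_def]
      rw [show (volume : Measure (EuclideanSpace ℂ (Fin n))) = Measure.map (WithLp.toLp 2)
        (Measure.pi fun _ : Fin n => (volume : Measure ℂ)) from rfl,
        Measure.map_apply hmeas (by simpa only [hZ_def] using hZm j)]
      exact Measure.pi_pi (fun _ => (volume : Measure ℂ)) _
    rw [hpp]
    rw [← Finset.mul_prod_erase Finset.univ _ (Finset.mem_univ i0), if_pos rfl,
      hannulus (ν j) (hν_pos j)]
    rw [Finset.prod_congr rfl (fun i hi => by
      rw [if_neg (Finset.ne_of_mem_erase hi), hball (ν j) (hν_pos j).le]),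
      Finset.prod_const]
    rw [show (Finset.univ.erase i0).card = n - 1 by
      rw [Finset.card_erase_of_mem (Finset.mem_univ i0), Finset.card_univ, Fintype.card_fin]]
    rw [← ENNReal.ofReal_pow (by positivity), ← ENNReal.ofReal_mul (by positivity)]
  -- the integrand
  set f : EuclideanSpace ℂ (Fin n) × ℂ → ENNReal := fun x =>
    ENNReal.ofReal (‖x.1 i0‖ ^ a / ‖x.2‖ ^ b) with hf_def
  have hflow : ∀ j, ENNReal.ofReal ((ν j / 2) ^ a / r j ^ b) * volume (Z j ×ˢ W j)
      ≤ ∫⁻ x in Z j ×ˢ W j, f x := by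
    intro j
    rw [← setLIntegral_const]
    refine setLIntegral_mono' ((hZm j).prod (hWm j)) ?_
    rintro ⟨z, w⟩ ⟨hz, hw⟩
    simp only [hf_def]
    refine ENNReal.ofReal_le_ofReal ?_
    have hz1 : ν j / 2 ≤ ‖z i0‖ := by
      simp only [hZ_def, Set.mem_preimage] at hz
      rw [Set.mem_univ_pi] at hz
      have h := hz i0
      rw [if_pos rfl] at h
      by_contra hcon
      exact h.2 (mem_ball_zero_iff.mpr (not_le.mp hcon))
    have hw1 : ‖w‖ ≤ r j := (mem_ball_zero_iff.mp hw.1).le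
    have hw0 : 0 < ‖w‖ := by
      refine lt_of_lt_of_le (hr_pos (j+1)) ?_
      by_contra hcon
      exact hw.2 (mem_ball_zero_iff.mpr (not_le.mp hcon))
    exact div_le_div₀ (Real.rpow_nonneg (norm_nonneg _) _)
      (Real.rpow_le_rpow (by positivity) hz1 ha)
      (Real.rpow_pos_of_pos hw0 _)
      (Real.rpow_le_rpow (norm_nonneg w) hw1 hb)
  -- rpow computations
  have hν_rpow : ∀ (j : ℕ) (c : ℝ), (ν j) ^ c = (2:ℝ) ^ (e j * c) / (Real.sqrt n) ^ c := by
    intro j c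
    simp only [hν_def, hR_def]
    rw [Real.div_rpow (Real.rpow_nonneg h2p.le _) hS.le, ← Real.rpow_mul h2p.le]
  have hr_rpow : ∀ (j : ℕ) (c : ℝ), (r j) ^ c = (2:ℝ) ^ ((-(j:ℝ)) * c) := by
    intro j c
    simp only [hr_def]
    rw [← Real.rpow_mul h2p.le]
  set ε : ℝ := (3/4:ℝ) ^ 2 * (2:ℝ) ^ (-(a+q)) / (Real.sqrt n) ^ (a + 2*(n:ℝ)) with hε_def
  have hε_pos : 0 < ε := by
    rw [hε_def]
    positivity
  have hpi1 : (1:ℝ) ≤ Real.pi := by linarith [Real.pi_gt_three]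
  have hG : ∀ j, ε ≤ ((ν j / 2) ^ a / r j ^ b)
      * (((3/4) * ν j ^ 2 * Real.pi) * (ν j ^ 2 * Real.pi) ^ (n-1))
      * ((3/4) * r j ^ 2 * Real.pi) := by
    intro j
    have hA : 0 ≤ (ν j / 2) ^ a / r j ^ b := by positivity
    have hmid : ν j ^ (2*n) ≤ ν j ^ 2 * Real.pi * (ν j ^ 2 * Real.pi) ^ (n-1) := by
      have e1 : ν j ^ (2*n) = ν j ^ 2 * (ν j ^ 2) ^ (n-1) := by
        rw [← pow_mul, ← pow_add]
        congr 1
        omega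
      rw [e1]
      have h1 : (ν j ^ 2) ^ (n-1) ≤ (ν j ^ 2 * Real.pi) ^ (n-1) :=
        pow_le_pow_left₀ (sq_nonneg _) (le_mul_of_one_le_right (sq_nonneg _) hpi1) _
      calc ν j ^ 2 * (ν j ^ 2) ^ (n-1) ≤ ν j ^ 2 * (ν j ^ 2 * Real.pi) ^ (n-1) :=
            mul_le_mul_of_nonneg_left h1 (sq_nonneg _)
        _ ≤ ν j ^ 2 * Real.pi * (ν j ^ 2 * Real.pi) ^ (n-1) :=
            mul_le_mul_of_nonneg_right (le_mul_of_one_le_right (sq_nonneg _) hpi1)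
              (pow_nonneg (by positivity) _)
    have step1 : ((ν j / 2) ^ a / r j ^ b) * ((3/4) * ν j ^ (2*n)) * ((3/4) * r j ^ 2)
        ≤ ((ν j / 2) ^ a / r j ^ b)
          * (((3/4) * ν j ^ 2 * Real.pi) * (ν j ^ 2 * Real.pi) ^ (n-1))
          * ((3/4) * r j ^ 2 * Real.pi) := by
      have hm1 : (3/4:ℝ) * ν j ^ (2*n) ≤ (3/4) * ν j ^ 2 * Real.pi * (ν j ^ 2 * Real.pi) ^ (n-1) := by
        nlinarith [hmid]
      have hm2 : (3/4:ℝ) * r j ^ 2 ≤ (3/4) * r j ^ 2 * Real.pi :=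
        le_mul_of_one_le_right (by positivity) hpi1
      have h1 : ((ν j / 2) ^ a / r j ^ b) * ((3/4) * ν j ^ (2*n))
          ≤ ((ν j / 2) ^ a / r j ^ b)
            * (((3/4) * ν j ^ 2 * Real.pi) * (ν j ^ 2 * Real.pi) ^ (n-1)) := by
        refine mul_le_mul_of_nonneg_left ?_ hA
        nlinarith [hm1]
      refine mul_le_mul h1 hm2 (by positivity) ?_
      have : (0:ℝ) ≤ ((3/4) * ν j ^ 2 * Real.pi) * (ν j ^ 2 * Real.pi) ^ (n-1) := by positivity
      positivity
    have hν2n : ν j ^ (2*n) = (2:ℝ) ^ (e j * (2*(n:ℝ))) / (Real.sqrt n) ^ (2*(n:ℝ)) := by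
      rw [← Real.rpow_natCast (ν j) (2*n), hν_rpow]
      push_cast
      ring_nf
    have hr2 : r j ^ 2 = (2:ℝ) ^ (-(2*(j:ℝ))) := by
      rw [← Real.rpow_natCast (r j) 2, hr_rpow]
      push_cast
      ring_nf
    have hrb : r j ^ b = (2:ℝ) ^ (-((j:ℝ) * b)) := by
      rw [hr_rpow]
      ring_nf
    have hν2 : (ν j / 2) ^ a = (2:ℝ) ^ (e j * a) / ((Real.sqrt n) ^ a * (2:ℝ) ^ a) := by
      rw [Real.div_rpow (hν_pos j).le h2p.le, hν_rpow, div_div]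
    have hAfree : ((ν j / 2) ^ a / r j ^ b) * ((3/4) * ν j ^ (2*n)) * ((3/4) * r j ^ 2)
        = (3/4:ℝ) ^ 2 * (2:ℝ) ^ (e j * a - a + (j:ℝ) * b + e j * (2*(n:ℝ)) - 2*(j:ℝ))
          / (Real.sqrt n) ^ (a + 2*(n:ℝ)) := by
      rw [hν2n, hr2, hrb, hν2]
      rw [show e j * a - a + (j:ℝ) * b + e j * (2*(n:ℝ)) - 2*(j:ℝ)
          = (e j * a) + (-a) + ((j:ℝ) * b) + (e j * (2*(n:ℝ))) + (-(2*(j:ℝ))) by ring]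
      rw [Real.rpow_add h2p, Real.rpow_add h2p, Real.rpow_add h2p, Real.rpow_add h2p]
      rw [Real.rpow_add hS a (2*(n:ℝ))]
      rw [Real.rpow_neg h2p.le a, Real.rpow_neg h2p.le ((j:ℝ) * b),
        Real.rpow_neg h2p.le (2*(j:ℝ))]
      have n1 : (2:ℝ) ^ (e j * a) ≠ 0 := (Real.rpow_pos_of_pos h2p _).ne'
      have n2 : (2:ℝ) ^ ((j:ℝ) * b) ≠ 0 := (Real.rpow_pos_of_pos h2p _).ne'
      have n3 : (2:ℝ) ^ (e j * (2*(n:ℝ))) ≠ 0 := (Real.rpow_pos_of_pos h2p _).ne'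
      have n4 : (2:ℝ) ^ (2*(j:ℝ)) ≠ 0 := (Real.rpow_pos_of_pos h2p _).ne'
      have n5 : (2:ℝ) ^ a ≠ 0 := (Real.rpow_pos_of_pos h2p _).ne'
      have n6 : (Real.sqrt n) ^ a ≠ 0 := (Real.rpow_pos_of_pos hS _).ne'
      have n7 : (Real.sqrt n) ^ (2*(n:ℝ)) ≠ 0 := (Real.rpow_pos_of_pos hS _).ne'
      field_simp
    have hqe : e j * (a + 2*(n:ℝ)) = -((j:ℝ) + 1) * q := by
      simp only [he_def, hq_def]
      field_simp
    have hT : -(a+q) ≤ e j * a - a + (j:ℝ) * b + e j * (2*(n:ℝ)) - 2*(j:ℝ) := by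
      nlinarith [hqe, mul_nonneg (Nat.cast_nonneg j : (0:ℝ) ≤ (j:ℝ)) hbq]
    calc ε = (3/4:ℝ) ^ 2 * (2:ℝ) ^ (-(a+q)) / (Real.sqrt n) ^ (a + 2*(n:ℝ)) := hε_def
      _ ≤ (3/4:ℝ) ^ 2 * (2:ℝ) ^ (e j * a - a + (j:ℝ) * b + e j * (2*(n:ℝ)) - 2*(j:ℝ))
          / (Real.sqrt n) ^ (a + 2*(n:ℝ)) := by
          gcongr
          norm_num
      _ = ((ν j / 2) ^ a / r j ^ b) * ((3/4) * ν j ^ (2*n)) * ((3/4) * r j ^ 2) := hAfree.symm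
      _ ≤ _ := step1
  have hmain : ∀ j, ENNReal.ofReal ε ≤ ∫⁻ x in Z j ×ˢ W j, f x := by
    intro j
    refine le_trans ?_ (hflow j)
    rw [show volume (Z j ×ˢ W j) = volume (Z j) * volume (W j) by
      rw [Measure.volume_eq_prod, Measure.prod_prod]]
    rw [hZvol j, hWvol j, ← ENNReal.ofReal_mul (by positivity), ← ENNReal.ofReal_mul (by positivity)]
    refine ENNReal.ofReal_le_ofReal ?_
    calc ε ≤ ((ν j / 2) ^ a / r j ^ b)
          * (((3/4) * ν j ^ 2 * Real.pi) * (ν j ^ 2 * Real.pi) ^ (n-1))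
          * ((3/4) * r j ^ 2 * Real.pi) := hG j
      _ = (ν j / 2) ^ a / r j ^ b
          * ((3/4) * ν j ^ 2 * Real.pi * (ν j ^ 2 * Real.pi) ^ (n-1)
            * ((3/4) * r j ^ 2 * Real.pi)) := by ring
  rw [← top_le_iff]
  calc (⊤ : ENNReal) = ∑' _ : ℕ, ENNReal.ofReal ε :=
        (ENNReal.tsum_const_eq_top_of_ne_zero (ENNReal.ofReal_pos.mpr hε_pos).ne').symm
    _ ≤ ∑' j : ℕ, ∫⁻ x in Z j ×ˢ W j, f x := ENNReal.tsum_le_tsum hmain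
    _ = ∫⁻ x in ⋃ j, Z j ×ˢ W j, f x :=
        (lintegral_iUnion (fun j => (hZm j).prod (hWm j)) hdisj f).symm
    _ ≤ ∫⁻ x in Omega k n, f x := lintegral_mono_set (Set.iUnion_subset hsub)
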